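/- arXiv:2302.13828 — 2 statements merged into one kernel-verified Lean document; each statement's English description precedes it below -/
import Mathlib

section
/- Let $m : [0,1]^D \to \mathbb{R}$ be additive, $m(x) = \sum_{d=1}^D m_d(x_d)$ with each $m_d$ continuous, let $g$ be continuously differentiable on an interval containing the image of $m$ with $g'(z) \ge M' > 0$, and set $p = g \circ m$. Fix $d$ and a box $\mathcal{A} = \prod_{j=1}^D [\gamma_1^{(j)}, \gamma_2^{(j)}]$ with $\gamma_1^{(j)} < \gamma_2^{(j)}$. If the function $\psi_d(t) = \int_{\prod_{j \ne d}[\gamma_1^{(j)},\gamma_2^{(j)}]} p(x_1,\dots,x_{d-1},t,x_{d+1},\dots,x_D)\,\prod_{j\ne d} dx_j$ is constant in $t$ on $[\gamma_1^{(d)},\gamma_2^{(d)}]$, then $m_d$ is constant on $[\gamma_1^{(d)},\gamma_2^{(d)}]$. -/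
open MeasureTheory

/-- Lower bound for the increment of a function with derivative bounded below on an interval. -/
lemma g_increment_lower_bound (M M' : ℝ) (g : ℝ → ℝ)
    (hgderiv : ∀ z ∈ Set.Icc (-M) M, HasDerivAt g (deriv g z) z)
    (hglb : ∀ z ∈ Set.Icc (-M) M, M' ≤ deriv g z)
    {u v : ℝ} (hu : u ∈ Set.Icc (-M) M) (hv : v ∈ Set.Icc (-M) M) (huv : u ≤ v) :
    M' * (v - u) ≤ g v - g u := by
  set h : ℝ → ℝ := fun z => g z - M' * z with hh
  have hderiv : ∀ z ∈ Set.Icc (-M) M, HasDerivAt h (deriv g z - M') z := by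
    intro z hz
    exact ((hgderiv z hz).sub ((hasDerivAt_id z).const_mul M')).congr_deriv (by ring)
  have hcont : ContinuousOn h (Set.Icc (-M) M) := fun z hz =>
    (hderiv z hz).continuousAt.continuousWithinAt
  have hint : interior (Set.Icc (-M) M) ⊆ Set.Icc (-M) M := interior_subset
  have hmono : MonotoneOn h (Set.Icc (-M) M) := by
    apply monotoneOn_of_deriv_nonneg (convex_Icc _ _) hcont
    · intro z hz
      exact ((hderiv z (hint hz)).differentiableAt).differentiableWithinAt
    · intro z hz
      have := (hderiv z (hint hz)).deriv
      rw [this]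
      have := hglb z (hint hz)
      linarith
  have := hmono hu hv huv
  simp only [hh] at this
  nlinarith

theorem additive_component_constant_of_marginal_constant
    (D : ℕ) (d : Fin D)
    (md : Fin D → ℝ → ℝ) (hmd : ∀ j, Continuous (md j))
    (m : (Fin D → ℝ) → ℝ) (hm : ∀ x, m x = ∑ j, md j (x j))
    (M : ℝ) (hM : ∀ x ∈ Set.Icc (0 : Fin D → ℝ) 1, m x ∈ Set.Icc (-M) M)
    (g : ℝ → ℝ) (M' : ℝ) (hM' : 0 < M')
    (hgderiv : ∀ z ∈ Set.Icc (-M) M, HasDerivAt g (deriv g z) z)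
    (hgcont : ContinuousOn (deriv g) (Set.Icc (-M) M))
    (hglb : ∀ z ∈ Set.Icc (-M) M, M' ≤ deriv g z)
    (p : (Fin D → ℝ) → ℝ) (hp : ∀ x, p x = g (m x))
    (γ₁ γ₂ : Fin D → ℝ)
    (hbox : ∀ j, 0 ≤ γ₁ j ∧ γ₁ j < γ₂ j ∧ γ₂ j ≤ 1)
    (ψ : ℝ → ℝ)
    (hψ : ∀ t, ψ t =
      ∫ x in Set.univ.pi (fun j => Set.Icc (γ₁ j) (γ₂ j)),
        p (Function.update x d t) ∂(volume : Measure (Fin D → ℝ)))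
    (hconst : ∀ t₁ ∈ Set.Icc (γ₁ d) (γ₂ d), ∀ t₂ ∈ Set.Icc (γ₁ d) (γ₂ d),
      ψ t₁ = ψ t₂) :
    ∀ t₁ ∈ Set.Icc (γ₁ d) (γ₂ d), ∀ t₂ ∈ Set.Icc (γ₁ d) (γ₂ d),
      md d t₁ = md d t₂ := by
  -- the box
  set s : Set (Fin D → ℝ) := Set.univ.pi (fun j => Set.Icc (γ₁ j) (γ₂ j)) with hs
  have hsmeas : MeasurableSet s := MeasurableSet.univ_pi fun j => measurableSet_Icc
  have hscompact : IsCompact s := isCompact_univ_pi fun j => isCompact_Icc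
  have hsfin : (volume : Measure (Fin D → ℝ)) s ≠ ⊤ := hscompact.measure_lt_top.ne
  -- positive volume
  have hvol : 0 < ((volume : Measure (Fin D → ℝ)) s).toReal := by
    have hv : (volume : Measure (Fin D → ℝ)) s = ∏ j, ENNReal.ofReal (γ₂ j - γ₁ j) := by
      rw [hs, volume_pi_pi]
      simp [Real.volume_Icc]
    refine ENNReal.toReal_pos ?_ hsfin
    rw [hv]
    exact Finset.prod_ne_zero_iff.mpr fun j _ =>
      (ENNReal.ofReal_pos.mpr (sub_pos.mpr (hbox j).2.1)).ne'
  -- updated points lie in the unit cube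
  have hinbox : ∀ t ∈ Set.Icc (γ₁ d) (γ₂ d), ∀ x ∈ s,
      Function.update x d t ∈ Set.Icc (0 : Fin D → ℝ) 1 := by
    intro t ht x hx
    rw [Set.mem_Icc]
    constructor <;> intro j <;>
    · rcases eq_or_ne j d with rfl | hjd
      · simp only [Function.update_self, Pi.zero_apply, Pi.one_apply]
        first
        | exact le_trans (hbox j).1 ht.1
        | exact le_trans ht.2 (hbox j).2.2
      · have hxj := hx j (Set.mem_univ j)
        simp only [Function.update_of_ne hjd, Pi.zero_apply, Pi.one_apply]
        first
        | exact le_trans (hbox j).1 hxj.1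
        | exact le_trans hxj.2 (hbox j).2.2
  -- m of updated points
  have hmupd : ∀ (t : ℝ) (x : Fin D → ℝ),
      m (Function.update x d t) = md d t + ∑ j ∈ Finset.univ.erase d, md j (x j) := by
    intro t x
    rw [hm]
    have : ∀ j : Fin D, md j (Function.update x d t j)
        = Function.update (fun j => md j (x j)) d (md d t) j := by
      intro j
      rcases eq_or_ne j d with rfl | hjd
      · simp
      · simp [Function.update_of_ne hjd]
    rw [Finset.sum_congr rfl fun j _ => this j]
    rw [Finset.sum_update_of_mem (Finset.mem_univ d)]
    congr 1
    exact (Finset.sum_congr (by simp [Finset.sdiff_singleton_eq_erase]) fun _ _ => rfl)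
  -- continuity of m
  have hmcont : Continuous m := by
    have : m = fun x => ∑ j, md j (x j) := funext hm
    rw [this]
    exact continuous_finset_sum _ fun j _ => (hmd j).comp (continuous_apply j)
  have hgcontOn : ContinuousOn g (Set.Icc (-M) M) := fun z hz =>
    (hgderiv z hz).continuousAt.continuousWithinAt
  -- integrability of the marginal integrand
  have hint : ∀ t ∈ Set.Icc (γ₁ d) (γ₂ d),
      IntegrableOn (fun x => p (Function.update x d t)) s volume := by
    intro t ht
    have hupd : Continuous fun x : Fin D → ℝ => Function.update x d t :=
      continuous_id.update d continuous_const
    have hco : ContinuousOn (fun x => p (Function.update x d t)) s := by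
      have : (fun x => p (Function.update x d t))
          = g ∘ (fun x => m (Function.update x d t)) := by
        funext x; simp [hp]
      rw [this]
      apply hgcontOn.comp ((hmcont.comp hupd).continuousOn)
      intro x hx
      exact hM _ (hinbox t ht x hx)
    exact hco.integrableOn_compact hscompact
  -- the key strict monotonicity of ψ
  have hkey : ∀ t₁ ∈ Set.Icc (γ₁ d) (γ₂ d), ∀ t₂ ∈ Set.Icc (γ₁ d) (γ₂ d),
      md d t₂ < md d t₁ → ψ t₂ < ψ t₁ := by
    intro t₁ ht₁ t₂ ht₂ hlt
    have h₁ := hint t₁ ht₁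
    have h₂ := hint t₂ ht₂
    have hdiff : ψ t₁ - ψ t₂
        = ∫ x in s, (p (Function.update x d t₁) - p (Function.update x d t₂)) := by
      rw [hψ, hψ, ← integral_sub h₁ h₂]
    set c : ℝ := M' * (md d t₁ - md d t₂) with hc
    have hcpos : 0 < c := mul_pos hM' (sub_pos.mpr hlt)
    have hbound : ∀ x ∈ s,
        c ≤ p (Function.update x d t₁) - p (Function.update x d t₂) := by
      intro x hx
      have hu : m (Function.update x d t₂) ∈ Set.Icc (-M) M := hM _ (hinbox t₂ ht₂ x hx)
      have hv : m (Function.update x d t₁) ∈ Set.Icc (-M) M := hM _ (hinbox t₁ ht₁ x hx)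
      have huv : m (Function.update x d t₂) ≤ m (Function.update x d t₁) := by
        rw [hmupd, hmupd]; linarith
      have := g_increment_lower_bound M M' g hgderiv hglb hu hv huv
      have heq : m (Function.update x d t₁) - m (Function.update x d t₂)
          = md d t₁ - md d t₂ := by
        rw [hmupd, hmupd]; ring
      rw [hp, hp]
      calc c = M' * (m (Function.update x d t₁) - m (Function.update x d t₂)) := by
              rw [heq]
        _ ≤ _ := this
    have hge : c * ((volume : Measure (Fin D → ℝ)) s).toReal ≤ ψ t₁ - ψ t₂ := by
      rw [hdiff]
      exact (le_of_eq (by rw [smul_eq_mul, mul_comm, measureReal_def])).trans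
        (setIntegral_ge_of_const_le hsmeas hsfin hbound (h₁.sub h₂))
    nlinarith
  -- conclude
  intro t₁ ht₁ t₂ ht₂
  by_contra hne
  rcases lt_or_gt_of_ne hne with h | h
  · exact absurd (hconst t₁ ht₁ t₂ ht₂) (ne_of_lt (hkey t₂ ht₂ t₁ ht₁ h))
  · exact absurd (hconst t₁ ht₁ t₂ ht₂) (ne_of_gt (hkey t₁ ht₁ t₂ ht₂ h))
end

section
/- Let $Q \in \mathbb{R}^{n \times n}$ be symmetric positive definite and strictly diagonally dominant with $Q_{ii} - \sum_{j\ne i}|Q_{ij}| \ge \xi > 0$, let $Z \in \{0,1\}^{n\times K}$ be a membership matrix (each row has exactly one entry equal to 1) with every column nonzero, and let $y \in [0,1]^n$. Then the GLS estimate $\hat\beta = (Z^\top Q Z)^{-1} Z^\top Q y$ satisfies $\|\hat\beta\|_\infty \le \frac{\max_i \sum_j |Q_{ij}|}{\xi}$. -/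
open Matrix in


theorem gls_estimate_uniform_bound (n K : ℕ) [NeZero n]
    (Q : Matrix (Fin n) (Fin n) ℝ) (hpd : Q.PosDef)
    (ξ : ℝ) (hξ : 0 < ξ)
    (hdd : ∀ i, ξ ≤ Q i i - ∑ j ∈ Finset.univ.erase i, |Q i j|)
    (Z : Matrix (Fin n) (Fin K) ℝ)
    (hZ01 : ∀ i k, Z i k = 0 ∨ Z i k = 1)
    (hrow : ∀ i, ∃! k, Z i k = 1)
    (hcol : ∀ k, ∃ i, Z i k = 1)
    (y : Fin n → ℝ) (hy : ∀ i, y i ∈ Set.Icc (0 : ℝ) 1)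
    (β : Fin K → ℝ)
    (hβ : β = (Z.transpose * Q * Z)⁻¹.mulVec (Z.transpose.mulVec (Q.mulVec y))) :
    ∀ k, |β k| ≤ (Finset.univ.sup' Finset.univ_nonempty
      (fun i => ∑ j, |Q i j|)) / ξ := by
  classical
  intro k
  set M : ℝ := Finset.univ.sup' Finset.univ_nonempty (fun i => ∑ j, |Q i j|) with hMdef
  have hM : ∀ i, (∑ j, |Q i j|) ≤ M := fun i =>
    Finset.le_sup' (fun i => ∑ j, |Q i j|) (Finset.mem_univ i)
  -- cluster map
  choose c hc1 hc2 using hrow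
  have hZ : ∀ i k', Z i k' = if k' = c i then 1 else 0 := by
    intro i k'
    by_cases h : k' = c i
    · subst h; simp [hc1 i]
    · rcases hZ01 i k' with h0 | h1
      · simp [h, h0]
      · exact absurd (hc2 i k' h1) h
  -- Z *ᵥ x evaluates the vector at cluster
  have hmv : ∀ (x : Fin K → ℝ) i, (Z *ᵥ x) i = x (c i) := by
    intro x i
    simp only [Matrix.mulVec, dotProduct]
    rw [Finset.sum_eq_single (c i)]
    · simp [hc1 i]
    · intro b _ hb; rw [hZ i b, if_neg hb, zero_mul]
    · intro h; exact absurd (Finset.mem_univ _) h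
  -- Z *ᵥ is injective
  have hZinj : ∀ x : Fin K → ℝ, Z *ᵥ x = 0 → x = 0 := by
    intro x hx
    funext l
    obtain ⟨i, hi⟩ := hcol l
    have hci : c i = l := (hc2 i l hi).symm
    have := congrFun hx i
    rw [hmv x i, hci] at this
    simpa using this
  -- positivity of A = Zᵀ Q Z
  have hApd : (Zᵀ * Q * Z).PosDef := by
    refine Matrix.PosDef.of_dotProduct_mulVec_pos ?_ ?_
    · have hq : Qᴴ = Q := hpd.isHermitian
      show (Zᵀ * Q * Z)ᴴ = Zᵀ * Q * Z
      rw [Matrix.conjTranspose_mul, Matrix.conjTranspose_mul, hq]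
      have hz : Zᴴ = Zᵀ := Matrix.conjTranspose_eq_transpose_of_trivial Z
      have hzt : (Zᵀ)ᴴ = Z := by
        rw [Matrix.conjTranspose_eq_transpose_of_trivial, Matrix.transpose_transpose]
      rw [hz, hzt, Matrix.mul_assoc]
    · intro x hx
      have hzx : Z *ᵥ x ≠ 0 := fun h => hx (hZinj x h)
      have h2 := hpd.dotProduct_mulVec_pos hzx
      simpa [← Matrix.mulVec_mulVec, dotProduct_mulVec,
        Matrix.vecMul_transpose, star_trivial] using h2
  have hdet : IsUnit (Zᵀ * Q * Z).det := hApd.isUnit.map Matrix.detMonoidHom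
  -- the normal equation
  have hEq : (Zᵀ * Q * Z) *ᵥ β = Zᵀ *ᵥ (Q *ᵥ y) := by
    rw [hβ, Matrix.mulVec_mulVec, Matrix.mul_nonsing_inv _ hdet, Matrix.one_mulVec]
  set v : Fin n → ℝ := Z *ᵥ β with hvdef
  have hEq2 : Zᵀ *ᵥ (Q *ᵥ v) = Zᵀ *ᵥ (Q *ᵥ y) := by
    rw [hvdef, Matrix.mulVec_mulVec, Matrix.mulVec_mulVec]
    exact hEq
  -- pick maximizing index
  obtain ⟨k0, -, hk0⟩ := Finset.exists_max_image Finset.univ (fun l => |β l|)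
    ⟨k, Finset.mem_univ k⟩
  have hk0' : ∀ l, |β l| ≤ |β k0| := fun l => hk0 l (Finset.mem_univ l)
  set m : ℝ := |β k0| with hmdef
  have hm0 : 0 ≤ m := abs_nonneg _
  set S : Finset (Fin n) := Finset.univ.filter (fun i => c i = k0) with hSdef
  have hSne : S.Nonempty := by
    obtain ⟨i, hi⟩ := hcol k0
    exact ⟨i, by simp [hSdef, (hc2 i k0 hi).symm]⟩
  -- group-sum formula for Zᵀ *ᵥ w
  have hgroup : ∀ w : Fin n → ℝ, (Zᵀ *ᵥ w) k0 = ∑ i ∈ S, w i := by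
    intro w
    simp only [Matrix.mulVec, dotProduct, Matrix.transpose_apply]
    rw [hSdef, Finset.sum_filter]
    refine Finset.sum_congr rfl fun i _ => ?_
    rw [hZ i k0]
    by_cases h : c i = k0
    · rw [if_pos h.symm, if_pos h, one_mul]
    · rw [if_neg (fun hh => h hh.symm), if_neg h, zero_mul]
  have hkey : ∑ i ∈ S, (Q *ᵥ v) i = ∑ i ∈ S, (Q *ᵥ y) i := by
    have := congrFun hEq2 k0
    rwa [hgroup, hgroup] at this
  -- bounds on |v| and |y|
  have hv : ∀ i, v i = β (c i) := fun i => hmv β i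
  have hvb : ∀ i, |v i| ≤ m := fun i => by rw [hv i]; exact hk0' (c i)
  have hyb : ∀ i, |y i| ≤ 1 := fun i => by
    obtain ⟨h0, h1⟩ := hy i
    rw [abs_of_nonneg h0]; exact h1
  -- RHS bound
  have hRHS : |∑ i ∈ S, (Q *ᵥ y) i| ≤ S.card * M := by
    calc |∑ i ∈ S, (Q *ᵥ y) i| ≤ ∑ i ∈ S, |(Q *ᵥ y) i| :=
          Finset.abs_sum_le_sum_abs _ _
      _ ≤ ∑ i ∈ S, M := by
          refine Finset.sum_le_sum fun i _ => ?_
          calc |(Q *ᵥ y) i| = |∑ j, Q i j * y j| := rfl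
            _ ≤ ∑ j, |Q i j * y j| := Finset.abs_sum_le_sum_abs _ _
            _ ≤ ∑ j, |Q i j| := by
                refine Finset.sum_le_sum fun j _ => ?_
                rw [abs_mul]
                calc |Q i j| * |y j| ≤ |Q i j| * 1 :=
                      mul_le_mul_of_nonneg_left (hyb j) (abs_nonneg _)
                  _ = |Q i j| := mul_one _
            _ ≤ M := hM i
      _ = S.card * M := by rw [Finset.sum_const, nsmul_eq_mul]
  -- LHS lower bound
  have hsplit : ∀ i ∈ S, (Q *ᵥ v) i
      = Q i i * β k0 + ∑ j ∈ Finset.univ.erase i, Q i j * v j := by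
    intro i hi
    have hci : c i = k0 := by simpa [hSdef] using hi
    have : (Q *ᵥ v) i = ∑ j, Q i j * v j := rfl
    rw [this, ← Finset.add_sum_erase Finset.univ _ (Finset.mem_univ i), hv i, hci]
  have hLHSeq : ∑ i ∈ S, (Q *ᵥ v) i
      = β k0 * (∑ i ∈ S, Q i i) + ∑ i ∈ S, ∑ j ∈ Finset.univ.erase i, Q i j * v j := by
    rw [Finset.sum_congr rfl hsplit, Finset.sum_add_distrib, Finset.mul_sum]
    congr 1
    exact Finset.sum_congr rfl fun i _ => mul_comm _ _
  set R : ℝ := ∑ i ∈ S, ∑ j ∈ Finset.univ.erase i, Q i j * v j with hRdef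
  set D : ℝ := ∑ i ∈ S, ∑ j ∈ Finset.univ.erase i, |Q i j| with hDdef
  have hRb : |R| ≤ m * D := by
    calc |R| ≤ ∑ i ∈ S, |∑ j ∈ Finset.univ.erase i, Q i j * v j| :=
          Finset.abs_sum_le_sum_abs _ _
      _ ≤ ∑ i ∈ S, ∑ j ∈ Finset.univ.erase i, |Q i j| * m := by
          refine Finset.sum_le_sum fun i _ => ?_
          refine le_trans (Finset.abs_sum_le_sum_abs _ _) ?_
          refine Finset.sum_le_sum fun j _ => ?_
          rw [abs_mul]
          exact mul_le_mul_of_nonneg_left (hvb j) (abs_nonneg _)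
      _ = m * D := by
          rw [hDdef, Finset.mul_sum]
          refine Finset.sum_congr rfl fun i _ => ?_
          rw [Finset.mul_sum]
          exact Finset.sum_congr rfl fun j _ => mul_comm _ _
  set T : ℝ := ∑ i ∈ S, Q i i with hTdef
  have hTD : m * ξ * S.card ≤ m * T - m * D := by
    have h1 : ξ * S.card ≤ T - D := by
      have : ∑ i ∈ S, ξ ≤ ∑ i ∈ S, (Q i i - ∑ j ∈ Finset.univ.erase i, |Q i j|) :=
        Finset.sum_le_sum fun i _ => hdd i
      rw [Finset.sum_const, nsmul_eq_mul, Finset.sum_sub_distrib] at this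
      calc ξ * S.card = (S.card : ℝ) * ξ := mul_comm _ _
        _ ≤ T - D := this
    have := mul_le_mul_of_nonneg_left h1 hm0
    calc m * ξ * S.card = m * (ξ * S.card) := by ring
      _ ≤ m * (T - D) := this
      _ = m * T - m * D := by ring
  -- |LHS| ≥ m*T - m*D
  have hT0 : 0 ≤ T := by
    refine Finset.sum_nonneg fun i _ => ?_
    have := hdd i
    have h0 : 0 ≤ ∑ j ∈ Finset.univ.erase i, |Q i j| :=
      Finset.sum_nonneg fun j _ => abs_nonneg _
    linarith
  have hLHSlb : m * T - m * D ≤ |∑ i ∈ S, (Q *ᵥ v) i| := by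
    rw [hLHSeq]
    have habs : |β k0 * T| = m * T := by
      rw [abs_mul, hmdef, abs_of_nonneg hT0]
    have : |β k0 * T| ≤ |β k0 * T + R| + |R| := by
      calc |β k0 * T| = |(β k0 * T + R) + (-R)| := by ring_nf
        _ ≤ |β k0 * T + R| + |(-R)| := abs_add_le _ _
        _ = |β k0 * T + R| + |R| := by rw [abs_neg]
    linarith [hRb, habs.symm.le, habs.le, this]
  have hcard1 : (1 : ℝ) ≤ S.card := by
    have := Finset.card_pos.mpr hSne
    exact_mod_cast this
  have hcard0 : (0 : ℝ) < S.card := lt_of_lt_of_le one_pos hcard1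
  have hfinal : m * ξ * S.card ≤ M * S.card := by
    calc m * ξ * S.card ≤ m * T - m * D := hTD
      _ ≤ |∑ i ∈ S, (Q *ᵥ v) i| := hLHSlb
      _ = |∑ i ∈ S, (Q *ᵥ y) i| := by rw [hkey]
      _ ≤ S.card * M := hRHS
      _ = M * S.card := mul_comm _ _
  have hmξ : m * ξ ≤ M := le_of_mul_le_mul_right hfinal hcard0
  have hmle : m ≤ M / ξ := (le_div_iff₀ hξ).mpr hmξ
  exact le_trans (hk0' k) hmle
end
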